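/- None of the five traditional divisor methods — Adams (f(t) = t), Jefferson (f(t) = t+1), Webster (f(t) = t + 1/2), Hill (f(t) = √(t(t+1))), and Dean (f(t) = t(t+1)/(t + 1/2)) — satisfies weight-monotonicity even when there are three agents: for each of these methods there exist an instance with three agents (a number of items, weights w_1 > w_2 > w_3 > 0, and additive utilities) and an increased weight w_1' > w_1 for agent 1 such that agent 1 receives strictly less utility from the allocation the method produces with weights (w_1', w_2, w_3) than with weights (w_1, w_2, w_3). -/

import Mathlib

open Finset

/-- The favorite item of an agent with item-utility function `u` among a remaining
set `R` of items: a highest-valued item, ties broken in favor of the lower-numbered item. -/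
noncomputable def favorite {m : ℕ} (u : Fin m → ℝ) (R : Finset (Fin m)) : Option (Fin m) :=
  if h : (R.filter fun j => ∀ j' ∈ R, u j' ≤ u j).Nonempty then
    some ((R.filter fun j => ∀ j' ∈ R, u j' ≤ u j).min' h)
  else none

/-- One step of the picking process: agent `a` picks her favorite remaining item. -/
noncomputable def pickStep {n m : ℕ} (u : Fin n → Fin m → ℝ)
    (st : Finset (Fin m) × (Fin n → Finset (Fin m))) (a : Fin n) :
    Finset (Fin m) × (Fin n → Finset (Fin m)) :=
  match favorite (u a) st.1 with
  | none => st
  | some j => (st.1.erase j, Function.update st.2 a (insert j (st.2 a)))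

/-- The allocation produced by letting agents pick their favorite remaining items
in the order given by the picking sequence `π`. -/
noncomputable def allocate {n m : ℕ} (u : Fin n → Fin m → ℝ) (π : List (Fin n)) :
    Fin n → Finset (Fin m) :=
  (π.foldl (pickStep u) (Finset.univ, fun _ => ∅)).2

/-- A divisor method is given by a strictly increasing `f : ℕ → ℝ` with `t ≤ f t ≤ t + 1`. -/
def IsDivisorFn (f : ℕ → ℝ) : Prop :=
  StrictMono f ∧ ∀ t : ℕ, (t : ℝ) ≤ f t ∧ f t ≤ t + 1

/-- `π` is the picking sequence induced by the divisor method with function `f` and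
weights `w`: each pick goes to an agent minimizing `f t_i / w_i` (where `t_i` is the
number of picks agent `i` has received so far), ties broken toward lower-numbered agents. -/
def IsDivisorSeq {n : ℕ} (f : ℕ → ℝ) (w : Fin n → ℝ) (π : List (Fin n)) : Prop :=
  ∀ (k : ℕ) (hk : k < π.length) (i : Fin n),
    f ((π.take k).count (π.get ⟨k, hk⟩)) / w (π.get ⟨k, hk⟩) ≤
      f ((π.take k).count i) / w i ∧
    (i < π.get ⟨k, hk⟩ →
      f ((π.take k).count (π.get ⟨k, hk⟩)) / w (π.get ⟨k, hk⟩) <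
        f ((π.take k).count i) / w i)

set_option linter.unusedTactic false


def Vm : Fin 3 → Fin 8 → ℕ := ![![3,0,0,3,3,3,3,0], ![0,3,0,0,3,1,2,1], ![2,0,3,0,0,2,0,1]]

noncomputable def Um : Fin 3 → Fin 8 → ℝ := fun i j => (Vm i j : ℝ)

lemma favorite_eq (V0 : Fin 8 → ℕ) (R : Finset (Fin 8)) (j : Fin 8)
    (hj : j ∈ R) (hmax : ∀ x ∈ R, V0 x ≤ V0 j)
    (hmin : ∀ x ∈ R, (∀ y ∈ R, V0 y ≤ V0 x) → j ≤ x) :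
    favorite (fun i => (V0 i : ℝ)) R = some j := by
  have hjS : j ∈ R.filter (fun jj => ∀ j' ∈ R, (fun i => (V0 i : ℝ)) j' ≤ (fun i => (V0 i : ℝ)) jj) := by
    rw [mem_filter]
    exact ⟨hj, fun x hx => Nat.cast_le.mpr (hmax x hx)⟩
  unfold favorite
  rw [dif_pos ⟨j, hjS⟩]
  congr 1
  apply le_antisymm
  · exact Finset.min'_le _ _ hjS
  · have hm := Finset.min'_mem _ (⟨j, hjS⟩ : (R.filter fun jj => ∀ j' ∈ R, (fun i => (V0 i : ℝ)) j' ≤ (fun i => (V0 i : ℝ)) jj).Nonempty)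
    rw [mem_filter] at hm
    exact hmin _ hm.1 (fun y hy => Nat.cast_le.mp (hm.2 y hy))

lemma stepEq (a : Fin 3) (R : Finset (Fin 8)) (A : Fin 3 → Finset (Fin 8)) (j : Fin 8)
    (hfav : favorite (Um a) R = some j) :
    pickStep Um (R, A) a = (R.erase j, Function.update A a (insert j (A a))) := by
  simp [pickStep, hfav]

lemma runA : allocate Um [0,1,2,0,1,0,2,0] 0 = ({0,3,5,6} : Finset (Fin 8)) := by
  have h0 : favorite (Um 0) Finset.univ = some 0 :=
    favorite_eq (Vm 0) _ 0 (by decide) (by decide) (by decide)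
  have h1 : favorite (Um 1) (Finset.univ.erase 0) = some 1 :=
    favorite_eq (Vm 1) _ 1 (by decide) (by decide) (by decide)
  have h2 : favorite (Um 2) ((Finset.univ.erase 0).erase 1) = some 2 :=
    favorite_eq (Vm 2) _ 2 (by decide) (by decide) (by decide)
  have h3 : favorite (Um 0) (((Finset.univ.erase 0).erase 1).erase 2) = some 3 :=
    favorite_eq (Vm 0) _ 3 (by decide) (by decide) (by decide)
  have h4 : favorite (Um 1) ((((Finset.univ.erase 0).erase 1).erase 2).erase 3) = some 4 :=
    favorite_eq (Vm 1) _ 4 (by decide) (by decide) (by decide)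
  have h5 : favorite (Um 0) (((((Finset.univ.erase 0).erase 1).erase 2).erase 3).erase 4) = some 5 :=
    favorite_eq (Vm 0) _ 5 (by decide) (by decide) (by decide)
  have h6 : favorite (Um 2) ((((((Finset.univ.erase 0).erase 1).erase 2).erase 3).erase 4).erase 5) = some 7 :=
    favorite_eq (Vm 2) _ 7 (by decide) (by decide) (by decide)
  have h7 : favorite (Um 0) (((((((Finset.univ.erase 0).erase 1).erase 2).erase 3).erase 4).erase 5).erase 7) = some 6 :=
    favorite_eq (Vm 0) _ 6 (by decide) (by decide) (by decide)
  unfold allocate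
  simp only [List.foldl_cons, List.foldl_nil,
    stepEq 0 _ _ 0 h0, stepEq 1 _ _ 1 h1, stepEq 2 _ _ 2 h2, stepEq 0 _ _ 3 h3,
    stepEq 1 _ _ 4 h4, stepEq 0 _ _ 5 h5, stepEq 2 _ _ 7 h6, stepEq 0 _ _ 6 h7]
  simp [Function.update]
  decide

lemma runB : allocate Um [0,1,2,0,0,1,2,0] 0 = ({0,3,4,7} : Finset (Fin 8)) := by
  have h0 : favorite (Um 0) Finset.univ = some 0 :=
    favorite_eq (Vm 0) _ 0 (by decide) (by decide) (by decide)
  have h1 : favorite (Um 1) (Finset.univ.erase 0) = some 1 :=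
    favorite_eq (Vm 1) _ 1 (by decide) (by decide) (by decide)
  have h2 : favorite (Um 2) ((Finset.univ.erase 0).erase 1) = some 2 :=
    favorite_eq (Vm 2) _ 2 (by decide) (by decide) (by decide)
  have h3 : favorite (Um 0) (((Finset.univ.erase 0).erase 1).erase 2) = some 3 :=
    favorite_eq (Vm 0) _ 3 (by decide) (by decide) (by decide)
  have h4 : favorite (Um 0) ((((Finset.univ.erase 0).erase 1).erase 2).erase 3) = some 4 :=
    favorite_eq (Vm 0) _ 4 (by decide) (by decide) (by decide)
  have h5 : favorite (Um 1) (((((Finset.univ.erase 0).erase 1).erase 2).erase 3).erase 4) = some 6 :=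
    favorite_eq (Vm 1) _ 6 (by decide) (by decide) (by decide)
  have h6 : favorite (Um 2) ((((((Finset.univ.erase 0).erase 1).erase 2).erase 3).erase 4).erase 6) = some 5 :=
    favorite_eq (Vm 2) _ 5 (by decide) (by decide) (by decide)
  have h7 : favorite (Um 0) (((((((Finset.univ.erase 0).erase 1).erase 2).erase 3).erase 4).erase 6).erase 5) = some 7 :=
    favorite_eq (Vm 0) _ 7 (by decide) (by decide) (by decide)
  unfold allocate
  simp only [List.foldl_cons, List.foldl_nil,
    stepEq 0 _ _ 0 h0, stepEq 1 _ _ 1 h1, stepEq 2 _ _ 2 h2, stepEq 0 _ _ 3 h3,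
    stepEq 0 _ _ 4 h4, stepEq 1 _ _ 6 h5, stepEq 2 _ _ 5 h6, stepEq 0 _ _ 7 h7]
  simp [Function.update]
  decide

lemma finalIneq :
    (∑ x ∈ allocate Um [0,1,2,0,0,1,2,0] 0, Um 0 x) < ∑ x ∈ allocate Um [0,1,2,0,1,0,2,0] 0, Um 0 x := by
  rw [runA, runB]
  have e : ∀ S : Finset (Fin 8), ∑ x ∈ S, Um 0 x = ((∑ x ∈ S, Vm 0 x : ℕ) : ℝ) := fun S => by
    rw [Nat.cast_sum]; rfl
  rw [e, e]
  exact_mod_cast (by decide :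
    (∑ x ∈ ({0,3,4,7} : Finset (Fin 8)), Vm 0 x) < ∑ x ∈ ({0,3,5,6} : Finset (Fin 8)), Vm 0 x)

lemma unonneg : ∀ (i : Fin 3) (j : Fin 8), 0 ≤ Um i j := fun i j => Nat.cast_nonneg _



lemma gA0 : ∀ h : (0:ℕ) < ([0,1,2,0,1,0,2,0]:List (Fin 3)).length, ([0,1,2,0,1,0,2,0]:List (Fin 3)).get ⟨0, h⟩ = 0 := fun _ => rfl
lemma cA00 : (([0,1,2,0,1,0,2,0]:List (Fin 3)).take 0).count (0:Fin 3) = 0 := rfl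
lemma dA00 : (([0,1,2,0,1,0,2,0]:List (Fin 3)).take 0).count ((⟨0, by omega⟩:Fin 3)) = 0 := rfl
lemma cA01 : (([0,1,2,0,1,0,2,0]:List (Fin 3)).take 0).count (1:Fin 3) = 0 := rfl
lemma dA01 : (([0,1,2,0,1,0,2,0]:List (Fin 3)).take 0).count ((⟨1, by omega⟩:Fin 3)) = 0 := rfl
lemma cA02 : (([0,1,2,0,1,0,2,0]:List (Fin 3)).take 0).count (2:Fin 3) = 0 := rfl
lemma dA02 : (([0,1,2,0,1,0,2,0]:List (Fin 3)).take 0).count ((⟨2, by omega⟩:Fin 3)) = 0 := rfl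
lemma gA1 : ∀ h : (1:ℕ) < ([0,1,2,0,1,0,2,0]:List (Fin 3)).length, ([0,1,2,0,1,0,2,0]:List (Fin 3)).get ⟨1, h⟩ = 1 := fun _ => rfl
lemma cA10 : (([0,1,2,0,1,0,2,0]:List (Fin 3)).take 1).count (0:Fin 3) = 1 := rfl
lemma dA10 : (([0,1,2,0,1,0,2,0]:List (Fin 3)).take 1).count ((⟨0, by omega⟩:Fin 3)) = 1 := rfl
lemma cA11 : (([0,1,2,0,1,0,2,0]:List (Fin 3)).take 1).count (1:Fin 3) = 0 := rfl
lemma dA11 : (([0,1,2,0,1,0,2,0]:List (Fin 3)).take 1).count ((⟨1, by omega⟩:Fin 3)) = 0 := rfl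
lemma cA12 : (([0,1,2,0,1,0,2,0]:List (Fin 3)).take 1).count (2:Fin 3) = 0 := rfl
lemma dA12 : (([0,1,2,0,1,0,2,0]:List (Fin 3)).take 1).count ((⟨2, by omega⟩:Fin 3)) = 0 := rfl
lemma gA2 : ∀ h : (2:ℕ) < ([0,1,2,0,1,0,2,0]:List (Fin 3)).length, ([0,1,2,0,1,0,2,0]:List (Fin 3)).get ⟨2, h⟩ = 2 := fun _ => rfl
lemma cA20 : (([0,1,2,0,1,0,2,0]:List (Fin 3)).take 2).count (0:Fin 3) = 1 := rfl
lemma dA20 : (([0,1,2,0,1,0,2,0]:List (Fin 3)).take 2).count ((⟨0, by omega⟩:Fin 3)) = 1 := rfl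
lemma cA21 : (([0,1,2,0,1,0,2,0]:List (Fin 3)).take 2).count (1:Fin 3) = 1 := rfl
lemma dA21 : (([0,1,2,0,1,0,2,0]:List (Fin 3)).take 2).count ((⟨1, by omega⟩:Fin 3)) = 1 := rfl
lemma cA22 : (([0,1,2,0,1,0,2,0]:List (Fin 3)).take 2).count (2:Fin 3) = 0 := rfl
lemma dA22 : (([0,1,2,0,1,0,2,0]:List (Fin 3)).take 2).count ((⟨2, by omega⟩:Fin 3)) = 0 := rfl
lemma gA3 : ∀ h : (3:ℕ) < ([0,1,2,0,1,0,2,0]:List (Fin 3)).length, ([0,1,2,0,1,0,2,0]:List (Fin 3)).get ⟨3, h⟩ = 0 := fun _ => rfl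
lemma cA30 : (([0,1,2,0,1,0,2,0]:List (Fin 3)).take 3).count (0:Fin 3) = 1 := rfl
lemma dA30 : (([0,1,2,0,1,0,2,0]:List (Fin 3)).take 3).count ((⟨0, by omega⟩:Fin 3)) = 1 := rfl
lemma cA31 : (([0,1,2,0,1,0,2,0]:List (Fin 3)).take 3).count (1:Fin 3) = 1 := rfl
lemma dA31 : (([0,1,2,0,1,0,2,0]:List (Fin 3)).take 3).count ((⟨1, by omega⟩:Fin 3)) = 1 := rfl
lemma cA32 : (([0,1,2,0,1,0,2,0]:List (Fin 3)).take 3).count (2:Fin 3) = 1 := rfl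
lemma dA32 : (([0,1,2,0,1,0,2,0]:List (Fin 3)).take 3).count ((⟨2, by omega⟩:Fin 3)) = 1 := rfl
lemma gA4 : ∀ h : (4:ℕ) < ([0,1,2,0,1,0,2,0]:List (Fin 3)).length, ([0,1,2,0,1,0,2,0]:List (Fin 3)).get ⟨4, h⟩ = 1 := fun _ => rfl
lemma cA40 : (([0,1,2,0,1,0,2,0]:List (Fin 3)).take 4).count (0:Fin 3) = 2 := rfl
lemma dA40 : (([0,1,2,0,1,0,2,0]:List (Fin 3)).take 4).count ((⟨0, by omega⟩:Fin 3)) = 2 := rfl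
lemma cA41 : (([0,1,2,0,1,0,2,0]:List (Fin 3)).take 4).count (1:Fin 3) = 1 := rfl
lemma dA41 : (([0,1,2,0,1,0,2,0]:List (Fin 3)).take 4).count ((⟨1, by omega⟩:Fin 3)) = 1 := rfl
lemma cA42 : (([0,1,2,0,1,0,2,0]:List (Fin 3)).take 4).count (2:Fin 3) = 1 := rfl
lemma dA42 : (([0,1,2,0,1,0,2,0]:List (Fin 3)).take 4).count ((⟨2, by omega⟩:Fin 3)) = 1 := rfl
lemma gA5 : ∀ h : (5:ℕ) < ([0,1,2,0,1,0,2,0]:List (Fin 3)).length, ([0,1,2,0,1,0,2,0]:List (Fin 3)).get ⟨5, h⟩ = 0 := fun _ => rfl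
lemma cA50 : (([0,1,2,0,1,0,2,0]:List (Fin 3)).take 5).count (0:Fin 3) = 2 := rfl
lemma dA50 : (([0,1,2,0,1,0,2,0]:List (Fin 3)).take 5).count ((⟨0, by omega⟩:Fin 3)) = 2 := rfl
lemma cA51 : (([0,1,2,0,1,0,2,0]:List (Fin 3)).take 5).count (1:Fin 3) = 2 := rfl
lemma dA51 : (([0,1,2,0,1,0,2,0]:List (Fin 3)).take 5).count ((⟨1, by omega⟩:Fin 3)) = 2 := rfl
lemma cA52 : (([0,1,2,0,1,0,2,0]:List (Fin 3)).take 5).count (2:Fin 3) = 1 := rfl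
lemma dA52 : (([0,1,2,0,1,0,2,0]:List (Fin 3)).take 5).count ((⟨2, by omega⟩:Fin 3)) = 1 := rfl
lemma gA6 : ∀ h : (6:ℕ) < ([0,1,2,0,1,0,2,0]:List (Fin 3)).length, ([0,1,2,0,1,0,2,0]:List (Fin 3)).get ⟨6, h⟩ = 2 := fun _ => rfl
lemma cA60 : (([0,1,2,0,1,0,2,0]:List (Fin 3)).take 6).count (0:Fin 3) = 3 := rfl
lemma dA60 : (([0,1,2,0,1,0,2,0]:List (Fin 3)).take 6).count ((⟨0, by omega⟩:Fin 3)) = 3 := rfl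
lemma cA61 : (([0,1,2,0,1,0,2,0]:List (Fin 3)).take 6).count (1:Fin 3) = 2 := rfl
lemma dA61 : (([0,1,2,0,1,0,2,0]:List (Fin 3)).take 6).count ((⟨1, by omega⟩:Fin 3)) = 2 := rfl
lemma cA62 : (([0,1,2,0,1,0,2,0]:List (Fin 3)).take 6).count (2:Fin 3) = 1 := rfl
lemma dA62 : (([0,1,2,0,1,0,2,0]:List (Fin 3)).take 6).count ((⟨2, by omega⟩:Fin 3)) = 1 := rfl
lemma gA7 : ∀ h : (7:ℕ) < ([0,1,2,0,1,0,2,0]:List (Fin 3)).length, ([0,1,2,0,1,0,2,0]:List (Fin 3)).get ⟨7, h⟩ = 0 := fun _ => rfl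
lemma cA70 : (([0,1,2,0,1,0,2,0]:List (Fin 3)).take 7).count (0:Fin 3) = 3 := rfl
lemma dA70 : (([0,1,2,0,1,0,2,0]:List (Fin 3)).take 7).count ((⟨0, by omega⟩:Fin 3)) = 3 := rfl
lemma cA71 : (([0,1,2,0,1,0,2,0]:List (Fin 3)).take 7).count (1:Fin 3) = 2 := rfl
lemma dA71 : (([0,1,2,0,1,0,2,0]:List (Fin 3)).take 7).count ((⟨1, by omega⟩:Fin 3)) = 2 := rfl
lemma cA72 : (([0,1,2,0,1,0,2,0]:List (Fin 3)).take 7).count (2:Fin 3) = 2 := rfl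
lemma dA72 : (([0,1,2,0,1,0,2,0]:List (Fin 3)).take 7).count ((⟨2, by omega⟩:Fin 3)) = 2 := rfl

lemma gB0 : ∀ h : (0:ℕ) < ([0,1,2,0,0,1,2,0]:List (Fin 3)).length, ([0,1,2,0,0,1,2,0]:List (Fin 3)).get ⟨0, h⟩ = 0 := fun _ => rfl
lemma cB00 : (([0,1,2,0,0,1,2,0]:List (Fin 3)).take 0).count (0:Fin 3) = 0 := rfl
lemma dB00 : (([0,1,2,0,0,1,2,0]:List (Fin 3)).take 0).count ((⟨0, by omega⟩:Fin 3)) = 0 := rfl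
lemma cB01 : (([0,1,2,0,0,1,2,0]:List (Fin 3)).take 0).count (1:Fin 3) = 0 := rfl
lemma dB01 : (([0,1,2,0,0,1,2,0]:List (Fin 3)).take 0).count ((⟨1, by omega⟩:Fin 3)) = 0 := rfl
lemma cB02 : (([0,1,2,0,0,1,2,0]:List (Fin 3)).take 0).count (2:Fin 3) = 0 := rfl
lemma dB02 : (([0,1,2,0,0,1,2,0]:List (Fin 3)).take 0).count ((⟨2, by omega⟩:Fin 3)) = 0 := rfl
lemma gB1 : ∀ h : (1:ℕ) < ([0,1,2,0,0,1,2,0]:List (Fin 3)).length, ([0,1,2,0,0,1,2,0]:List (Fin 3)).get ⟨1, h⟩ = 1 := fun _ => rfl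
lemma cB10 : (([0,1,2,0,0,1,2,0]:List (Fin 3)).take 1).count (0:Fin 3) = 1 := rfl
lemma dB10 : (([0,1,2,0,0,1,2,0]:List (Fin 3)).take 1).count ((⟨0, by omega⟩:Fin 3)) = 1 := rfl
lemma cB11 : (([0,1,2,0,0,1,2,0]:List (Fin 3)).take 1).count (1:Fin 3) = 0 := rfl
lemma dB11 : (([0,1,2,0,0,1,2,0]:List (Fin 3)).take 1).count ((⟨1, by omega⟩:Fin 3)) = 0 := rfl
lemma cB12 : (([0,1,2,0,0,1,2,0]:List (Fin 3)).take 1).count (2:Fin 3) = 0 := rfl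
lemma dB12 : (([0,1,2,0,0,1,2,0]:List (Fin 3)).take 1).count ((⟨2, by omega⟩:Fin 3)) = 0 := rfl
lemma gB2 : ∀ h : (2:ℕ) < ([0,1,2,0,0,1,2,0]:List (Fin 3)).length, ([0,1,2,0,0,1,2,0]:List (Fin 3)).get ⟨2, h⟩ = 2 := fun _ => rfl
lemma cB20 : (([0,1,2,0,0,1,2,0]:List (Fin 3)).take 2).count (0:Fin 3) = 1 := rfl
lemma dB20 : (([0,1,2,0,0,1,2,0]:List (Fin 3)).take 2).count ((⟨0, by omega⟩:Fin 3)) = 1 := rfl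
lemma cB21 : (([0,1,2,0,0,1,2,0]:List (Fin 3)).take 2).count (1:Fin 3) = 1 := rfl
lemma dB21 : (([0,1,2,0,0,1,2,0]:List (Fin 3)).take 2).count ((⟨1, by omega⟩:Fin 3)) = 1 := rfl
lemma cB22 : (([0,1,2,0,0,1,2,0]:List (Fin 3)).take 2).count (2:Fin 3) = 0 := rfl
lemma dB22 : (([0,1,2,0,0,1,2,0]:List (Fin 3)).take 2).count ((⟨2, by omega⟩:Fin 3)) = 0 := rfl
lemma gB3 : ∀ h : (3:ℕ) < ([0,1,2,0,0,1,2,0]:List (Fin 3)).length, ([0,1,2,0,0,1,2,0]:List (Fin 3)).get ⟨3, h⟩ = 0 := fun _ => rfl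
lemma cB30 : (([0,1,2,0,0,1,2,0]:List (Fin 3)).take 3).count (0:Fin 3) = 1 := rfl
lemma dB30 : (([0,1,2,0,0,1,2,0]:List (Fin 3)).take 3).count ((⟨0, by omega⟩:Fin 3)) = 1 := rfl
lemma cB31 : (([0,1,2,0,0,1,2,0]:List (Fin 3)).take 3).count (1:Fin 3) = 1 := rfl
lemma dB31 : (([0,1,2,0,0,1,2,0]:List (Fin 3)).take 3).count ((⟨1, by omega⟩:Fin 3)) = 1 := rfl
lemma cB32 : (([0,1,2,0,0,1,2,0]:List (Fin 3)).take 3).count (2:Fin 3) = 1 := rfl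
lemma dB32 : (([0,1,2,0,0,1,2,0]:List (Fin 3)).take 3).count ((⟨2, by omega⟩:Fin 3)) = 1 := rfl
lemma gB4 : ∀ h : (4:ℕ) < ([0,1,2,0,0,1,2,0]:List (Fin 3)).length, ([0,1,2,0,0,1,2,0]:List (Fin 3)).get ⟨4, h⟩ = 0 := fun _ => rfl
lemma cB40 : (([0,1,2,0,0,1,2,0]:List (Fin 3)).take 4).count (0:Fin 3) = 2 := rfl
lemma dB40 : (([0,1,2,0,0,1,2,0]:List (Fin 3)).take 4).count ((⟨0, by omega⟩:Fin 3)) = 2 := rfl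
lemma cB41 : (([0,1,2,0,0,1,2,0]:List (Fin 3)).take 4).count (1:Fin 3) = 1 := rfl
lemma dB41 : (([0,1,2,0,0,1,2,0]:List (Fin 3)).take 4).count ((⟨1, by omega⟩:Fin 3)) = 1 := rfl
lemma cB42 : (([0,1,2,0,0,1,2,0]:List (Fin 3)).take 4).count (2:Fin 3) = 1 := rfl
lemma dB42 : (([0,1,2,0,0,1,2,0]:List (Fin 3)).take 4).count ((⟨2, by omega⟩:Fin 3)) = 1 := rfl
lemma gB5 : ∀ h : (5:ℕ) < ([0,1,2,0,0,1,2,0]:List (Fin 3)).length, ([0,1,2,0,0,1,2,0]:List (Fin 3)).get ⟨5, h⟩ = 1 := fun _ => rfl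
lemma cB50 : (([0,1,2,0,0,1,2,0]:List (Fin 3)).take 5).count (0:Fin 3) = 3 := rfl
lemma dB50 : (([0,1,2,0,0,1,2,0]:List (Fin 3)).take 5).count ((⟨0, by omega⟩:Fin 3)) = 3 := rfl
lemma cB51 : (([0,1,2,0,0,1,2,0]:List (Fin 3)).take 5).count (1:Fin 3) = 1 := rfl
lemma dB51 : (([0,1,2,0,0,1,2,0]:List (Fin 3)).take 5).count ((⟨1, by omega⟩:Fin 3)) = 1 := rfl
lemma cB52 : (([0,1,2,0,0,1,2,0]:List (Fin 3)).take 5).count (2:Fin 3) = 1 := rfl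
lemma dB52 : (([0,1,2,0,0,1,2,0]:List (Fin 3)).take 5).count ((⟨2, by omega⟩:Fin 3)) = 1 := rfl
lemma gB6 : ∀ h : (6:ℕ) < ([0,1,2,0,0,1,2,0]:List (Fin 3)).length, ([0,1,2,0,0,1,2,0]:List (Fin 3)).get ⟨6, h⟩ = 2 := fun _ => rfl
lemma cB60 : (([0,1,2,0,0,1,2,0]:List (Fin 3)).take 6).count (0:Fin 3) = 3 := rfl
lemma dB60 : (([0,1,2,0,0,1,2,0]:List (Fin 3)).take 6).count ((⟨0, by omega⟩:Fin 3)) = 3 := rfl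
lemma cB61 : (([0,1,2,0,0,1,2,0]:List (Fin 3)).take 6).count (1:Fin 3) = 2 := rfl
lemma dB61 : (([0,1,2,0,0,1,2,0]:List (Fin 3)).take 6).count ((⟨1, by omega⟩:Fin 3)) = 2 := rfl
lemma cB62 : (([0,1,2,0,0,1,2,0]:List (Fin 3)).take 6).count (2:Fin 3) = 1 := rfl
lemma dB62 : (([0,1,2,0,0,1,2,0]:List (Fin 3)).take 6).count ((⟨2, by omega⟩:Fin 3)) = 1 := rfl
lemma gB7 : ∀ h : (7:ℕ) < ([0,1,2,0,0,1,2,0]:List (Fin 3)).length, ([0,1,2,0,0,1,2,0]:List (Fin 3)).get ⟨7, h⟩ = 0 := fun _ => rfl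
lemma cB70 : (([0,1,2,0,0,1,2,0]:List (Fin 3)).take 7).count (0:Fin 3) = 3 := rfl
lemma dB70 : (([0,1,2,0,0,1,2,0]:List (Fin 3)).take 7).count ((⟨0, by omega⟩:Fin 3)) = 3 := rfl
lemma cB71 : (([0,1,2,0,0,1,2,0]:List (Fin 3)).take 7).count (1:Fin 3) = 2 := rfl
lemma dB71 : (([0,1,2,0,0,1,2,0]:List (Fin 3)).take 7).count ((⟨1, by omega⟩:Fin 3)) = 2 := rfl
lemma cB72 : (([0,1,2,0,0,1,2,0]:List (Fin 3)).take 7).count (2:Fin 3) = 2 := rfl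
lemma dB72 : (([0,1,2,0,0,1,2,0]:List (Fin 3)).take 7).count ((⟨2, by omega⟩:Fin 3)) = 2 := rfl

set_option maxHeartbeats 1000000 in
lemma seq_adamsA : IsDivisorSeq (fun t : ℕ => (t : ℝ)) ![2, 29/24, 1] [0,1,2,0,1,0,2,0] := by
  intro k hk i
  have hk8 : k < 8 := by simpa using hk
  interval_cases k <;> fin_cases i <;>
    simp only [gA0, cA00, dA00, cA01, dA01, cA02, dA02, gA1, cA10, dA10, cA11, dA11, cA12, dA12, gA2, cA20, dA20, cA21, dA21, cA22, dA22, gA3, cA30, dA30, cA31, dA31, cA32, dA32, gA4, cA40, dA40, cA41, dA41, cA42, dA42, gA5, cA50, dA50, cA51, dA51, cA52, dA52, gA6, cA60, dA60, cA61, dA61, cA62, dA62, gA7, cA70, dA70, cA71, dA71, cA72, dA72] <;>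
    refine ⟨?_, fun hlt => ?_⟩ <;>
    first
      | exact absurd hlt (by decide)
      | (norm_num [Matrix.cons_val_two]; done)


set_option maxHeartbeats 1000000 in
lemma seq_adamsB : IsDivisorSeq (fun t : ℕ => (t : ℝ)) ![29/12, 29/24, 1] [0,1,2,0,0,1,2,0] := by
  intro k hk i
  have hk8 : k < 8 := by simpa using hk
  interval_cases k <;> fin_cases i <;>
    simp only [gB0, cB00, dB00, cB01, dB01, cB02, dB02, gB1, cB10, dB10, cB11, dB11, cB12, dB12, gB2, cB20, dB20, cB21, dB21, cB22, dB22, gB3, cB30, dB30, cB31, dB31, cB32, dB32, gB4, cB40, dB40, cB41, dB41, cB42, dB42, gB5, cB50, dB50, cB51, dB51, cB52, dB52, gB6, cB60, dB60, cB61, dB61, cB62, dB62, gB7, cB70, dB70, cB71, dB71, cB72, dB72] <;>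
    refine ⟨?_, fun hlt => ?_⟩ <;>
    first
      | exact absurd hlt (by decide)
      | (norm_num [Matrix.cons_val_two]; done)


set_option maxHeartbeats 1000000 in
lemma seq_jeffA : IsDivisorSeq (fun t : ℕ => (t : ℝ) + 1) ![19/12, 9/8, 1] [0,1,2,0,1,0,2,0] := by
  intro k hk i
  have hk8 : k < 8 := by simpa using hk
  interval_cases k <;> fin_cases i <;>
    simp only [gA0, cA00, dA00, cA01, dA01, cA02, dA02, gA1, cA10, dA10, cA11, dA11, cA12, dA12, gA2, cA20, dA20, cA21, dA21, cA22, dA22, gA3, cA30, dA30, cA31, dA31, cA32, dA32, gA4, cA40, dA40, cA41, dA41, cA42, dA42, gA5, cA50, dA50, cA51, dA51, cA52, dA52, gA6, cA60, dA60, cA61, dA61, cA62, dA62, gA7, cA70, dA70, cA71, dA71, cA72, dA72] <;>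
    refine ⟨?_, fun hlt => ?_⟩ <;>
    first
      | exact absurd hlt (by decide)
      | (norm_num [Matrix.cons_val_two]; done)


set_option maxHeartbeats 1000000 in
lemma seq_jeffB : IsDivisorSeq (fun t : ℕ => (t : ℝ) + 1) ![43/24, 9/8, 1] [0,1,2,0,0,1,2,0] := by
  intro k hk i
  have hk8 : k < 8 := by simpa using hk
  interval_cases k <;> fin_cases i <;>
    simp only [gB0, cB00, dB00, cB01, dB01, cB02, dB02, gB1, cB10, dB10, cB11, dB11, cB12, dB12, gB2, cB20, dB20, cB21, dB21, cB22, dB22, gB3, cB30, dB30, cB31, dB31, cB32, dB32, gB4, cB40, dB40, cB41, dB41, cB42, dB42, gB5, cB50, dB50, cB51, dB51, cB52, dB52, gB6, cB60, dB60, cB61, dB61, cB62, dB62, gB7, cB70, dB70, cB71, dB71, cB72, dB72] <;>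
    refine ⟨?_, fun hlt => ?_⟩ <;>
    first
      | exact absurd hlt (by decide)
      | (norm_num [Matrix.cons_val_two]; done)


set_option maxHeartbeats 1000000 in
lemma seq_websterA : IsDivisorSeq (fun t : ℕ => (t : ℝ) + 1 / 2) ![43/24, 29/24, 1] [0,1,2,0,1,0,2,0] := by
  intro k hk i
  have hk8 : k < 8 := by simpa using hk
  interval_cases k <;> fin_cases i <;>
    simp only [gA0, cA00, dA00, cA01, dA01, cA02, dA02, gA1, cA10, dA10, cA11, dA11, cA12, dA12, gA2, cA20, dA20, cA21, dA21, cA22, dA22, gA3, cA30, dA30, cA31, dA31, cA32, dA32, gA4, cA40, dA40, cA41, dA41, cA42, dA42, gA5, cA50, dA50, cA51, dA51, cA52, dA52, gA6, cA60, dA60, cA61, dA61, cA62, dA62, gA7, cA70, dA70, cA71, dA71, cA72, dA72] <;>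
    refine ⟨?_, fun hlt => ?_⟩ <;>
    first
      | exact absurd hlt (by decide)
      | (norm_num [Matrix.cons_val_two]; done)


set_option maxHeartbeats 1000000 in
lemma seq_websterB : IsDivisorSeq (fun t : ℕ => (t : ℝ) + 1 / 2) ![13/6, 29/24, 1] [0,1,2,0,0,1,2,0] := by
  intro k hk i
  have hk8 : k < 8 := by simpa using hk
  interval_cases k <;> fin_cases i <;>
    simp only [gB0, cB00, dB00, cB01, dB01, cB02, dB02, gB1, cB10, dB10, cB11, dB11, cB12, dB12, gB2, cB20, dB20, cB21, dB21, cB22, dB22, gB3, cB30, dB30, cB31, dB31, cB32, dB32, gB4, cB40, dB40, cB41, dB41, cB42, dB42, gB5, cB50, dB50, cB51, dB51, cB52, dB52, gB6, cB60, dB60, cB61, dB61, cB62, dB62, gB7, cB70, dB70, cB71, dB71, cB72, dB72] <;>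
    refine ⟨?_, fun hlt => ?_⟩ <;>
    first
      | exact absurd hlt (by decide)
      | (norm_num [Matrix.cons_val_two]; done)


set_option maxHeartbeats 1000000 in
lemma seq_hillA : IsDivisorSeq (fun t : ℕ => Real.sqrt ((t : ℝ) * ((t : ℝ) + 1))) ![15/8, 7/6, 1] [0,1,2,0,1,0,2,0] := by
  intro k hk i
  have hk8 : k < 8 := by simpa using hk
  have s2 := Real.sq_sqrt (show (0:ℝ) ≤ 2 by norm_num)
  have s6 := Real.sq_sqrt (show (0:ℝ) ≤ 6 by norm_num)
  have s12 := Real.sq_sqrt (show (0:ℝ) ≤ 12 by norm_num)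
  have n2 := Real.sqrt_nonneg 2
  have n6 := Real.sqrt_nonneg 6
  have n12 := Real.sqrt_nonneg 12
  have h2l : (1.4142:ℝ) ≤ Real.sqrt 2 := by nlinarith
  have h2u : Real.sqrt 2 ≤ 1.41422 := by nlinarith
  have h6l : (2.449:ℝ) ≤ Real.sqrt 6 := by nlinarith
  have h6u : Real.sqrt 6 ≤ 2.4495 := by nlinarith
  have h12l : (3.4641:ℝ) ≤ Real.sqrt 12 := by nlinarith
  have h12u : Real.sqrt 12 ≤ 3.4642 := by nlinarith
  interval_cases k <;> fin_cases i <;>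
    simp only [gA0, cA00, dA00, cA01, dA01, cA02, dA02, gA1, cA10, dA10, cA11, dA11, cA12, dA12, gA2, cA20, dA20, cA21, dA21, cA22, dA22, gA3, cA30, dA30, cA31, dA31, cA32, dA32, gA4, cA40, dA40, cA41, dA41, cA42, dA42, gA5, cA50, dA50, cA51, dA51, cA52, dA52, gA6, cA60, dA60, cA61, dA61, cA62, dA62, gA7, cA70, dA70, cA71, dA71, cA72, dA72] <;>
    refine ⟨?_, fun hlt => ?_⟩ <;>
    first
      | exact absurd hlt (by decide)
      | (norm_num [Matrix.cons_val_two]; first | done | nlinarith [h2l, h2u, h6l, h6u, h12l, h12u, n2, n6, n12])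


set_option maxHeartbeats 1000000 in
lemma seq_hillB : IsDivisorSeq (fun t : ℕ => Real.sqrt ((t : ℝ) * ((t : ℝ) + 1))) ![53/24, 7/6, 1] [0,1,2,0,0,1,2,0] := by
  intro k hk i
  have hk8 : k < 8 := by simpa using hk
  have s2 := Real.sq_sqrt (show (0:ℝ) ≤ 2 by norm_num)
  have s6 := Real.sq_sqrt (show (0:ℝ) ≤ 6 by norm_num)
  have s12 := Real.sq_sqrt (show (0:ℝ) ≤ 12 by norm_num)
  have n2 := Real.sqrt_nonneg 2
  have n6 := Real.sqrt_nonneg 6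
  have n12 := Real.sqrt_nonneg 12
  have h2l : (1.4142:ℝ) ≤ Real.sqrt 2 := by nlinarith
  have h2u : Real.sqrt 2 ≤ 1.41422 := by nlinarith
  have h6l : (2.449:ℝ) ≤ Real.sqrt 6 := by nlinarith
  have h6u : Real.sqrt 6 ≤ 2.4495 := by nlinarith
  have h12l : (3.4641:ℝ) ≤ Real.sqrt 12 := by nlinarith
  have h12u : Real.sqrt 12 ≤ 3.4642 := by nlinarith
  interval_cases k <;> fin_cases i <;>
    simp only [gB0, cB00, dB00, cB01, dB01, cB02, dB02, gB1, cB10, dB10, cB11, dB11, cB12, dB12, gB2, cB20, dB20, cB21, dB21, cB22, dB22, gB3, cB30, dB30, cB31, dB31, cB32, dB32, gB4, cB40, dB40, cB41, dB41, cB42, dB42, gB5, cB50, dB50, cB51, dB51, cB52, dB52, gB6, cB60, dB60, cB61, dB61, cB62, dB62, gB7, cB70, dB70, cB71, dB71, cB72, dB72] <;>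
    refine ⟨?_, fun hlt => ?_⟩ <;>
    first
      | exact absurd hlt (by decide)
      | (norm_num [Matrix.cons_val_two]; first | done | nlinarith [h2l, h2u, h6l, h6u, h12l, h12u, n2, n6, n12])


set_option maxHeartbeats 1000000 in
lemma seq_deanA : IsDivisorSeq (fun t : ℕ => (t : ℝ) * ((t : ℝ) + 1) / ((t : ℝ) + 1 / 2)) ![2, 5/4, 1] [0,1,2,0,1,0,2,0] := by
  intro k hk i
  have hk8 : k < 8 := by simpa using hk
  interval_cases k <;> fin_cases i <;>
    simp only [gA0, cA00, dA00, cA01, dA01, cA02, dA02, gA1, cA10, dA10, cA11, dA11, cA12, dA12, gA2, cA20, dA20, cA21, dA21, cA22, dA22, gA3, cA30, dA30, cA31, dA31, cA32, dA32, gA4, cA40, dA40, cA41, dA41, cA42, dA42, gA5, cA50, dA50, cA51, dA51, cA52, dA52, gA6, cA60, dA60, cA61, dA61, cA62, dA62, gA7, cA70, dA70, cA71, dA71, cA72, dA72] <;>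
    refine ⟨?_, fun hlt => ?_⟩ <;>
    first
      | exact absurd hlt (by decide)
      | (norm_num [Matrix.cons_val_two]; done)


set_option maxHeartbeats 1000000 in
lemma seq_deanB : IsDivisorSeq (fun t : ℕ => (t : ℝ) * ((t : ℝ) + 1) / ((t : ℝ) + 1 / 2)) ![9/4, 5/4, 1] [0,1,2,0,0,1,2,0] := by
  intro k hk i
  have hk8 : k < 8 := by simpa using hk
  interval_cases k <;> fin_cases i <;>
    simp only [gB0, cB00, dB00, cB01, dB01, cB02, dB02, gB1, cB10, dB10, cB11, dB11, cB12, dB12, gB2, cB20, dB20, cB21, dB21, cB22, dB22, gB3, cB30, dB30, cB31, dB31, cB32, dB32, gB4, cB40, dB40, cB41, dB41, cB42, dB42, gB5, cB50, dB50, cB51, dB51, cB52, dB52, gB6, cB60, dB60, cB61, dB61, cB62, dB62, gB7, cB70, dB70, cB71, dB71, cB72, dB72] <;>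
    refine ⟨?_, fun hlt => ?_⟩ <;>
    first
      | exact absurd hlt (by decide)
      | (norm_num [Matrix.cons_val_two]; done)

/-- None of the five traditional divisor methods — Adams, Jefferson,
Webster, Hill, Dean — satisfies weight-monotonicity even with three agents: for each
of these methods there are an instance with three agents (weights
`w 0 > w 1 > w 2 > 0` and additive utilities) and an increased weight `w' 0 > w 0`
for agent 1 such that agent 1 receives strictly less utility from the allocation the
method produces with weights `w'` than with weights `w`. -/
theorem traditional_divisor_methods_not_weight_monotone
    (f : ℕ → ℝ)
    (hf : f = (fun t : ℕ => (t : ℝ)) ∨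
          f = (fun t : ℕ => (t : ℝ) + 1) ∨
          f = (fun t : ℕ => (t : ℝ) + 1 / 2) ∨
          f = (fun t : ℕ => Real.sqrt ((t : ℝ) * ((t : ℝ) + 1))) ∨
          f = (fun t : ℕ => (t : ℝ) * ((t : ℝ) + 1) / ((t : ℝ) + 1 / 2))) :
    ∃ (m : ℕ) (w w' : Fin 3 → ℝ) (u : Fin 3 → Fin m → ℝ) (π π' : List (Fin 3)),
      0 < w 2 ∧ w 2 < w 1 ∧ w 1 < w 0 ∧
      w 0 < w' 0 ∧ w' 1 = w 1 ∧ w' 2 = w 2 ∧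
      (∀ i j, 0 ≤ u i j) ∧
      π.length = m ∧ π'.length = m ∧
      IsDivisorSeq f w π ∧ IsDivisorSeq f w' π' ∧
      (∑ x ∈ allocate u π' 0, u 0 x) < ∑ x ∈ allocate u π 0, u 0 x := by
  rcases hf with hf | hf | hf | hf | hf <;> subst hf
  · exact ⟨8, ![2, 29/24, 1], ![29/12, 29/24, 1], Um, [0,1,2,0,1,0,2,0], [0,1,2,0,0,1,2,0],
      by norm_num [Matrix.cons_val_two], by norm_num [Matrix.cons_val_two], by norm_num, by norm_num, by norm_num, by norm_num [Matrix.cons_val_two],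
      unonneg, rfl, rfl, seq_adamsA, seq_adamsB, finalIneq⟩
  · exact ⟨8, ![19/12, 9/8, 1], ![43/24, 9/8, 1], Um, [0,1,2,0,1,0,2,0], [0,1,2,0,0,1,2,0],
      by norm_num [Matrix.cons_val_two], by norm_num [Matrix.cons_val_two], by norm_num, by norm_num, by norm_num, by norm_num [Matrix.cons_val_two],
      unonneg, rfl, rfl, seq_jeffA, seq_jeffB, finalIneq⟩
  · exact ⟨8, ![43/24, 29/24, 1], ![13/6, 29/24, 1], Um, [0,1,2,0,1,0,2,0], [0,1,2,0,0,1,2,0],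
      by norm_num [Matrix.cons_val_two], by norm_num [Matrix.cons_val_two], by norm_num, by norm_num, by norm_num, by norm_num [Matrix.cons_val_two],
      unonneg, rfl, rfl, seq_websterA, seq_websterB, finalIneq⟩
  · exact ⟨8, ![15/8, 7/6, 1], ![53/24, 7/6, 1], Um, [0,1,2,0,1,0,2,0], [0,1,2,0,0,1,2,0],
      by norm_num [Matrix.cons_val_two], by norm_num [Matrix.cons_val_two], by norm_num, by norm_num, by norm_num, by norm_num [Matrix.cons_val_two],
      unonneg, rfl, rfl, seq_hillA, seq_hillB, finalIneq⟩
  · exact ⟨8, ![2, 5/4, 1], ![9/4, 5/4, 1], Um, [0,1,2,0,1,0,2,0], [0,1,2,0,0,1,2,0],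
      by norm_num [Matrix.cons_val_two], by norm_num [Matrix.cons_val_two], by norm_num, by norm_num, by norm_num, by norm_num [Matrix.cons_val_two],
      unonneg, rfl, rfl, seq_deanA, seq_deanB, finalIneq⟩
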